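/- Let F be a CDF on [0,1] with density f and median θ_μ ≤ 1/2 satisfying ∫₀^{θ_μ}(1 - F(θ_μ+t) - F(θ_μ-t))dt ≥ 0. Then the function K(θ_s) := ∫₀^{θ_s} -(v - θ_s)² f(v) dv + (θ_μ - θ_s)² is nondecreasing in θ_s on [2θ_μ, 1]. -/

import Mathlib

open MeasureTheory intervalIntegral Set

/-- For a CDF `F` on `[0,1]` with density `f`, median `θμ ≤ 1/2`,
and skewness condition, `K(θs) = ∫₀^{θs} -(v - θs)² f(v) dv + (θμ - θs)²`
is nondecreasing in `θs` on `[2θμ, 1]`. -/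
theorem K_monotone
    (F f : ℝ → ℝ) (θμ : ℝ)
    (hF : ∀ x, HasDerivAt F (f x) x)
    (hf : Continuous f)
    (hfpos : ∀ x ∈ Set.Icc (0:ℝ) 1, 0 < f x)
    (hF0 : F 0 = 0) (hF1 : F 1 = 1)
    (hmed : F θμ = 1/2) (hθμ0 : 0 ≤ θμ) (hθμ : θμ ≤ 1/2)
    (hskew : 0 ≤ ∫ t in (0:ℝ)..θμ, (1 - F (θμ + t) - F (θμ - t))) :
    MonotoneOn (fun θs => (∫ v in (0:ℝ)..θs, -(v - θs)^2 * f v) + (θμ - θs)^2)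
      (Set.Icc (2*θμ) 1) := by
  have hFc : Continuous F := by
    rw [continuous_iff_continuousAt]; exact fun x => (hF x).continuousAt
  set G : ℝ → ℝ := fun θ => ∫ t in (0:ℝ)..θ, F t with hGdef
  have hGd : ∀ θ, HasDerivAt G (F θ) θ := fun θ =>
    intervalIntegral.integral_hasDerivAt_right (hFc.intervalIntegrable _ _)
      (hFc.stronglyMeasurableAtFilter _ _) hFc.continuousAt
  -- integration by parts: ∫₀^θ v f(v) dv = θ F θ - G θ
  have hByparts : ∀ θ : ℝ, (∫ v in (0:ℝ)..θ, v * f v) = θ * F θ - G θ := by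
    intro θ
    have h := intervalIntegral.integral_mul_deriv_eq_deriv_mul
      (u := fun x : ℝ => x) (u' := fun _ : ℝ => (1:ℝ)) (v := F) (v' := f)
      (fun x _ => hasDerivAt_id x) (fun x _ => hF x)
      (continuous_const.intervalIntegrable (0:ℝ) θ) (hf.intervalIntegrable _ _)
    rw [hF0] at h
    have h2 : (∫ x in (0:ℝ)..θ, (1:ℝ) * F x) = G θ := by
      simp [hGdef]
    rw [h2] at h
    rw [h]; ring
  -- rewrite K
  have hK : ∀ θ : ℝ, (∫ v in (0:ℝ)..θ, -(v - θ)^2 * f v) + (θμ - θ)^2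
      = -(∫ v in (0:ℝ)..θ, v^2 * f v) + 2*θ*(∫ v in (0:ℝ)..θ, v * f v)
        - θ^2 * F θ + (θμ - θ)^2 := by
    intro θ
    have hi1 : IntervalIntegrable (fun v => -(v^2 * f v)) volume 0 θ :=
      ((continuous_id.pow 2).mul hf).neg.intervalIntegrable _ _
    have hi2 : IntervalIntegrable (fun v => 2*θ*(v * f v)) volume 0 θ :=
      (continuous_const.mul (continuous_id.mul hf)).intervalIntegrable _ _
    have hi3 : IntervalIntegrable (fun v => θ^2 * f v) volume 0 θ :=
      (continuous_const.mul hf).intervalIntegrable _ _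
    have hFint : (∫ v in (0:ℝ)..θ, f v) = F θ := by
      rw [intervalIntegral.integral_eq_sub_of_hasDerivAt (fun x _ => hF x)
        (hf.intervalIntegrable _ _), hF0, sub_zero]
    have h1 : (∫ v in (0:ℝ)..θ, -(v - θ)^2 * f v)
        = ∫ v in (0:ℝ)..θ, (-(v^2 * f v) + 2*θ*(v * f v) - θ^2 * f v) := by
      apply intervalIntegral.integral_congr
      intro v _; ring
    rw [h1, intervalIntegral.integral_sub (hi1.add hi2) hi3,
      intervalIntegral.integral_add hi1 hi2,
      intervalIntegral.integral_neg, intervalIntegral.integral_const_mul,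
      intervalIntegral.integral_const_mul, hFint]
  -- derivative of K
  have hKd : ∀ θ : ℝ, HasDerivAt
      (fun θs => (∫ v in (0:ℝ)..θs, -(v - θs)^2 * f v) + (θμ - θs)^2)
      (2*(θ - θμ - G θ)) θ := by
    intro θ
    have hA : HasDerivAt (fun θ : ℝ => ∫ v in (0:ℝ)..θ, v^2 * f v) (θ^2 * f θ) θ :=
      intervalIntegral.integral_hasDerivAt_right
        (((continuous_id.pow 2).mul hf).intervalIntegrable _ _)
        (((continuous_id.pow 2).mul hf).stronglyMeasurableAtFilter _ _)
        ((continuous_id.pow 2).mul hf).continuousAt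
    have hB : HasDerivAt (fun θ : ℝ => ∫ v in (0:ℝ)..θ, v * f v) (θ * f θ) θ :=
      intervalIntegral.integral_hasDerivAt_right
        ((continuous_id.mul hf).intervalIntegrable _ _)
        ((continuous_id.mul hf).stronglyMeasurableAtFilter _ _)
        (continuous_id.mul hf).continuousAt
    have h2 : HasDerivAt (fun θ : ℝ => 2*θ*(∫ v in (0:ℝ)..θ, v * f v))
        (2*(∫ v in (0:ℝ)..θ, v * f v) + 2*θ*(θ * f θ)) θ := by
      have := ((hasDerivAt_id θ).const_mul (2:ℝ)).mul hB
      refine this.congr_deriv ?_; simp only [id_eq]; ring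
    have h3 : HasDerivAt (fun θ : ℝ => θ^2 * F θ) (2*θ*F θ + θ^2 * f θ) θ := by
      have := (hasDerivAt_pow 2 θ).mul (hF θ)
      refine this.congr_deriv ?_; push_cast; ring
    have h4 : HasDerivAt (fun θ : ℝ => (θμ - θ)^2) (2*(θ - θμ)) θ := by
      have := ((hasDerivAt_id θ).const_sub θμ).pow 2
      refine this.congr_deriv ?_; simp only [id_eq]; push_cast; ring
    have hH := ((hA.neg.add h2).sub h3).add h4
    have hfun : (fun θs => (∫ v in (0:ℝ)..θs, -(v - θs)^2 * f v) + (θμ - θs)^2)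
        = fun θ : ℝ => -(∫ v in (0:ℝ)..θ, v^2 * f v) + 2*θ*(∫ v in (0:ℝ)..θ, v * f v)
          - θ^2 * F θ + (θμ - θ)^2 := funext hK
    rw [hfun]
    refine hH.congr_deriv ?_
    rw [hByparts θ]
    ring
  -- F ≤ 1 on [0,1]
  have hFmono : MonotoneOn F (Icc (0:ℝ) 1) := by
    apply monotoneOn_of_deriv_nonneg (convex_Icc 0 1) hFc.continuousOn
      (fun x _ => (hF x).differentiableAt.differentiableWithinAt)
    intro x hx
    rw [(hF x).deriv]
    rw [interior_Icc] at hx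
    exact (hfpos x ⟨hx.1.le, hx.2.le⟩).le
  have hFle1 : ∀ x ∈ Icc (0:ℝ) 1, F x ≤ 1 := by
    intro x hx
    have := hFmono hx (by norm_num : (1:ℝ) ∈ Icc (0:ℝ) 1) hx.2
    linarith [hF1]
  -- skewness: G (2θμ) ≤ θμ
  have hskew' : G (2*θμ) ≤ θμ := by
    have hiA : IntervalIntegrable (fun t => F (θμ + t)) volume 0 θμ :=
      (hFc.comp (continuous_const.add continuous_id)).intervalIntegrable _ _
    have hiB : IntervalIntegrable (fun t => F (θμ - t)) volume 0 θμ :=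
      (hFc.comp (continuous_const.sub continuous_id)).intervalIntegrable _ _
    have hsplit : (∫ t in (0:ℝ)..θμ, (1 - F (θμ + t) - F (θμ - t)))
        = θμ - (∫ t in (0:ℝ)..θμ, F (θμ + t)) - (∫ t in (0:ℝ)..θμ, F (θμ - t)) := by
      rw [intervalIntegral.integral_sub
        (IntervalIntegrable.sub
          (continuous_const.intervalIntegrable _ _) hiA) hiB,
        intervalIntegral.integral_sub (continuous_const.intervalIntegrable _ _) hiA]
      simp
    have h2 : (∫ t in (0:ℝ)..θμ, F (θμ + t)) = ∫ x in θμ..(2*θμ), F x := by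
      rw [intervalIntegral.integral_comp_add_left F θμ]
      norm_num [two_mul]
    have h3 : (∫ t in (0:ℝ)..θμ, F (θμ - t)) = G θμ := by
      rw [intervalIntegral.integral_comp_sub_left F θμ]
      norm_num [hGdef]
    have h4 : G θμ + (∫ x in θμ..(2*θμ), F x) = G (2*θμ) :=
      intervalIntegral.integral_add_adjacent_intervals
        (hFc.intervalIntegrable _ _) (hFc.intervalIntegrable _ _)
    rw [hsplit, h2, h3] at hskew
    linarith
  -- φ monotone on [2θμ, 1]
  have hφd : ∀ θ : ℝ, HasDerivAt (fun θ => θ - θμ - G θ) (1 - F θ) θ := by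
    intro θ
    exact (((hasDerivAt_id θ).sub_const θμ).sub (hGd θ))
  have hφmono : MonotoneOn (fun θ => θ - θμ - G θ) (Icc (2*θμ) 1) := by
    apply monotoneOn_of_deriv_nonneg (convex_Icc _ _)
      (fun x _ => (hφd x).continuousAt.continuousWithinAt)
      (fun x _ => (hφd x).differentiableAt.differentiableWithinAt)
    intro x hx
    rw [(hφd x).deriv]
    rw [interior_Icc] at hx
    have hx01 : x ∈ Icc (0:ℝ) 1 := ⟨by nlinarith [hx.1], hx.2.le⟩
    linarith [hFle1 x hx01]
  have hpos : ∀ x ∈ interior (Icc (2*θμ) 1), 0 ≤ 2*(x - θμ - G x) := by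
    intro x hx
    rw [interior_Icc] at hx
    have hend : (2*θμ : ℝ) ∈ Icc (2*θμ) 1 := ⟨le_refl _, by linarith⟩
    have hxm : x ∈ Icc (2*θμ) 1 := ⟨hx.1.le, hx.2.le⟩
    have := hφmono hend hxm hx.1.le
    simp only at this
    have hstart : 0 ≤ 2*θμ - θμ - G (2*θμ) := by linarith
    linarith
  apply monotoneOn_of_deriv_nonneg (convex_Icc _ _)
    (fun x _ => (hKd x).continuousAt.continuousWithinAt)
    (fun x _ => (hKd x).differentiableAt.differentiableWithinAt)
  intro x hx
  rw [(hKd x).deriv]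
  exact hpos x hx
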